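/- Let 𝒳 and 𝒴 be LFCM spaces and F : 𝒜(𝒳) → 𝒜(𝒴) a full and faithful *-functor. Suppose that for every coarse 𝒳-module M there is a unitary U(M) : H_M → H_{F(M)} implementing the *-isomorphism End_{𝒜(𝒳)}(M) → End_{𝒜(𝒴)}(F(M)) induced by F. Then for every pair of coarse 𝒳-modules C and D and every approximable operator t : C → D, there exist central unitaries u ∈ End_{𝒜(𝒳)}(C) and v ∈ End_{𝒜(𝒳)}(D) such that F(t) = U(D) (v t u) U(C)*; that is, F(t) equals U(D) t U(C)* modulo central unitaries. -/

import Mathlib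

noncomputable section

open scoped ENNReal

/-! ## Relations -/

/-- Composition of relations: for `R ⊆ Z × Y` and `S ⊆ Y × X`,
`RelComp R S = {(z,x) | ∃ y, (z,y) ∈ R ∧ (y,x) ∈ S}`. -/
def RelComp {X Y Z : Type} (R : Set (Z × Y)) (S : Set (Y × X)) : Set (Z × X) :=
  {p | ∃ y, (p.1, y) ∈ R ∧ (y, p.2) ∈ S}

/-- Transpose of a relation. -/
def RelTrans {X Y : Type} (R : Set (Y × X)) : Set (X × Y) := {p | (p.2, p.1) ∈ R}

/-! ## Coarse spaces -/

/-- A coarse structure on a set `X`. -/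
structure CoarseSpace (X : Type) where
  entourages : Set (Set (X × X))
  diagonal_mem : {p : X × X | p.1 = p.2} ∈ entourages
  mem_of_subset : ∀ {E F : Set (X × X)}, E ∈ entourages → F ⊆ E → F ∈ entourages
  union_mem : ∀ {E F : Set (X × X)}, E ∈ entourages → F ∈ entourages → E ∪ F ∈ entourages
  transpose_mem : ∀ {E : Set (X × X)}, E ∈ entourages → RelTrans E ∈ entourages
  comp_mem : ∀ {E F : Set (X × X)}, E ∈ entourages → F ∈ entourages → RelComp E F ∈ entourages

namespace CoarseSpace

variable {X Y : Type}

/-- A gauge: a symmetric entourage containing the diagonal. -/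
def IsGauge (C : CoarseSpace X) (E : Set (X × X)) : Prop :=
  E ∈ C.entourages ∧ RelTrans E = E ∧ {p : X × X | p.1 = p.2} ⊆ E

/-- The `E`-neighbourhood `E[A]` of a set `A`. -/
def nbhd (E : Set (X × X)) (A : Set X) : Set X := {x | ∃ a ∈ A, (x, a) ∈ E}

/-- A set is bounded if `A × A` is contained in some entourage. -/
def IsBounded (C : CoarseSpace X) (A : Set X) : Prop := ∃ E ∈ C.entourages, A ×ˢ A ⊆ E

/-- `A ≺ B` : `A` is subordinate to `B`. -/
def Subordinate (C : CoarseSpace X) (A B : Set X) : Prop := ∃ E ∈ C.entourages, A ⊆ nbhd E B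

/-- `A ≍ B` : asymptotic equivalence of subsets. -/
def Asymptotic (C : CoarseSpace X) (A B : Set X) : Prop :=
  C.Subordinate A B ∧ C.Subordinate B A

/-- A coarse map between coarse spaces. -/
def IsCoarseMap (CX : CoarseSpace X) (CY : CoarseSpace Y) (f : X → Y) : Prop :=
  ∀ E ∈ CX.entourages, (fun p : X × X => (f p.1, f p.2)) '' E ∈ CY.entourages

/-- Two maps are close. -/
def Close (CX : CoarseSpace X) (CY : CoarseSpace Y) (f g : X → Y) : Prop :=
  ∀ E ∈ CX.entourages, (fun p : X × X => (f p.1, g p.2)) '' E ∈ CY.entourages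

/-- A coarse equivalence (of maps). -/
def IsCoarseEquivMap (CX : CoarseSpace X) (CY : CoarseSpace Y) (f : X → Y) : Prop :=
  IsCoarseMap CX CY f ∧ ∃ g : Y → X, IsCoarseMap CY CX g ∧
    Close CY CY (f ∘ g) id ∧ Close CX CX (g ∘ f) id

/-- A coarse embedding: a coarse map which is in addition expansive (equivalently, a coarse
equivalence onto its image with the subspace coarse structure). -/
def IsCoarseEmbedding (CX : CoarseSpace X) (CY : CoarseSpace Y) (f : X → Y) : Prop :=
  IsCoarseMap CX CY f ∧
    ∀ F ∈ CY.entourages, {p : X × X | (f p.1, f p.2) ∈ F} ∈ CX.entourages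

/-- A coarse structure is countably generated if it is the smallest coarse structure
containing some countable family of subsets of `X × X`. -/
def IsCountablyGenerated (C : CoarseSpace X) : Prop :=
  ∃ G : Set (Set (X × X)), G.Countable ∧ G ⊆ C.entourages ∧
    ∀ C' : CoarseSpace X, G ⊆ C'.entourages → C.entourages ⊆ C'.entourages

end CoarseSpace

/-- Subordination of relations `R₁, R₂ ⊆ Y × X` with respect to the product coarse structure. -/
def RelSub {X Y : Type} (CX : CoarseSpace X) (CY : CoarseSpace Y)
    (R₁ R₂ : Set (Y × X)) : Prop :=
  ∃ F ∈ CY.entourages, ∃ E ∈ CX.entourages,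
    ∀ p ∈ R₁, ∃ q ∈ R₂, (p.1, q.1) ∈ F ∧ (p.2, q.2) ∈ E

/-- Asymptotic equivalence of relations `R₁, R₂ ⊆ Y × X`. -/
def RelAsymp {X Y : Type} (CX : CoarseSpace X) (CY : CoarseSpace Y)
    (R₁ R₂ : Set (Y × X)) : Prop :=
  RelSub CX CY R₁ R₂ ∧ RelSub CX CY R₂ R₁

/-! ## LFCM spaces -/

/-- A discrete partition of a coarse space endowed with a Boolean algebra `meas` of subsets:
a measurable, locally finite, controlled partition `P` such that a set is measurable iff its
intersection with every block is measurable. -/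
structure IsDiscretePartition {X : Type} (C : CoarseSpace X) (meas : Set (Set X))
    (P : Set (Set X)) : Prop where
  nonempty : ∀ A ∈ P, A.Nonempty
  pairwiseDisjoint : ∀ A ∈ P, ∀ B ∈ P, A ≠ B → Disjoint A B
  covers : ⋃₀ P = Set.univ
  measurable : P ⊆ meas
  locallyFinite : ∀ B : Set X, C.IsBounded B → {A | A ∈ P ∧ (A ∩ B).Nonempty}.Finite
  controlled : ∃ E, C.IsGauge E ∧ ∀ A ∈ P, A ×ˢ A ⊆ E
  meas_iff : ∀ B : Set X, B ∈ meas ↔ ∀ A ∈ P, B ∩ A ∈ meas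

/-- A locally finite coarse measurable (LFCM) space: a coarse space together with a Boolean
algebra of subsets admitting a discrete partition (a chosen one is part of the data). -/
structure LFCMSpace (X : Type) where
  coarse : CoarseSpace X
  meas : Set (Set X)
  empty_mem : ∅ ∈ meas
  compl_mem : ∀ {A : Set X}, A ∈ meas → Aᶜ ∈ meas
  union_mem : ∀ {A B : Set X}, A ∈ meas → B ∈ meas → A ∪ B ∈ meas
  partition : Set (Set X)
  isPartition : IsDiscretePartition coarse meas partition

namespace LFCMSpace

variable {X Y : Type}

/-- The discreteness gauge `E_disc = ⊔_{A ∈ P} A × A` of an LFCM space. -/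
def disc (𝒳 : LFCMSpace X) : Set (X × X) := ⋃ A ∈ 𝒳.partition, A ×ˢ A

/-- A discreteness gauge: a gauge bounding the blocks of some discrete partition. -/
def IsDiscretenessGauge (𝒳 : LFCMSpace X) (E : Set (X × X)) : Prop :=
  𝒳.coarse.IsGauge E ∧
    ∃ P, IsDiscretePartition 𝒳.coarse 𝒳.meas P ∧ ∀ A ∈ P, A ×ˢ A ⊆ E

end LFCMSpace

/-- A coarse measurable map between LFCM spaces. -/
def IsCoarseMeasurableMap {X Y : Type} (𝒳 : LFCMSpace X) (𝒴 : LFCMSpace Y) (f : X → Y) : Prop :=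
  CoarseSpace.IsCoarseMap 𝒳.coarse 𝒴.coarse f ∧ ∀ B ∈ 𝒴.meas, f ⁻¹' B ∈ 𝒳.meas

/-! ## Coarse geometric modules -/

/-- A coarse geometric module over an LFCM space `𝒳`: a representation of the Boolean algebra
of measurable sets by orthogonal projections on a complex Hilbert space, nondegenerate on
bounded sets. -/
structure CoarseModule {X : Type} (𝒳 : LFCMSpace X) (H : Type) [NormedAddCommGroup H]
    [InnerProductSpace ℂ H] [CompleteSpace H] where
  proj : Set X → (H →L[ℂ] H)
  proj_empty : proj ∅ = 0
  proj_selfAdjoint : ∀ A ∈ 𝒳.meas, IsSelfAdjoint (proj A)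
  proj_inter : ∀ {A B : Set X}, A ∈ 𝒳.meas → B ∈ 𝒳.meas → proj (A ∩ B) = proj A ∘L proj B
  proj_union : ∀ {A B : Set X}, A ∈ 𝒳.meas → B ∈ 𝒳.meas → Disjoint A B →
      proj (A ∪ B) = proj A + proj B
  nondeg : Dense (↑(Submodule.span ℂ
      (⋃ A ∈ {A | A ∈ 𝒳.meas ∧ 𝒳.coarse.IsBounded A}, Set.range (proj A))) : Set H)

variable {X Y Z : Type}
variable {H₀ H₁ H₂ H₃ : Type}

/-- The support of a bounded operator between Hilbert spaces carrying representations
`pX`, `pY` of the measurable sets of LFCM spaces `𝒳` (source) and `𝒴` (target). -/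
def opSupp [NormedAddCommGroup H₁] [InnerProductSpace ℂ H₁]
    [NormedAddCommGroup H₂] [InnerProductSpace ℂ H₂]
    (𝒳 : LFCMSpace X) (𝒴 : LFCMSpace Y)
    (pX : Set X → (H₁ →L[ℂ] H₁)) (pY : Set Y → (H₂ →L[ℂ] H₂))
    (t : H₁ →L[ℂ] H₂) : Set (Y × X) :=
  ⋃₀ {S | ∃ B A, S = B ×ˢ A ∧ B ∈ 𝒴.meas ∧ B ×ˢ B ⊆ 𝒴.disc ∧
      A ∈ 𝒳.meas ∧ A ×ˢ A ⊆ 𝒳.disc ∧ pY B ∘L t ∘L pX A ≠ 0}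

/-- Controlled propagation of an operator between modules over the same LFCM space. -/
def HasControlledPropagation [NormedAddCommGroup H₁] [InnerProductSpace ℂ H₁]
    [NormedAddCommGroup H₂] [InnerProductSpace ℂ H₂]
    (𝒳 : LFCMSpace X) (pX : Set X → (H₁ →L[ℂ] H₁)) (pY : Set X → (H₂ →L[ℂ] H₂))
    (t : H₁ →L[ℂ] H₂) : Prop :=
  opSupp 𝒳 𝒳 pX pY t ∈ 𝒳.coarse.entourages

/-- Approximable operators: norm-limits of controlled propagation operators. -/
def Approximable [NormedAddCommGroup H₁] [InnerProductSpace ℂ H₁]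
    [NormedAddCommGroup H₂] [InnerProductSpace ℂ H₂]
    (𝒳 : LFCMSpace X) (pX : Set X → (H₁ →L[ℂ] H₁)) (pY : Set X → (H₂ →L[ℂ] H₂))
    (t : H₁ →L[ℂ] H₂) : Prop :=
  ∀ ε : ℝ, 0 < ε → ∃ s : H₁ →L[ℂ] H₂, HasControlledPropagation 𝒳 pX pY s ∧ ‖t - s‖ ≤ ε

/-- The rank (Hilbert dimension of the range) of an operator. -/
def projRank {H : Type} [NormedAddCommGroup H] [InnerProductSpace ℂ H]
    (p : H →L[ℂ] H) : Cardinal :=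
  LinearMap.rank (p : H →ₗ[ℂ] H)

/-- The `κ`-domain of a coarse module, computed with respect to an arbitrary gauge `E`. -/
def domKappaAt {X : Type} {H : Type} [NormedAddCommGroup H] [InnerProductSpace ℂ H]
    [CompleteSpace H] (𝒳 : LFCMSpace X) (M : CoarseModule 𝒳 H) (E : Set (X × X))
    (κ : Cardinal) : Set X :=
  ⋃₀ {A | A ∈ 𝒳.meas ∧ A ×ˢ A ⊆ E ∧ κ ≤ projRank (M.proj A)}

/-- The `κ`-domain of a coarse module (with respect to the discreteness gauge). -/
def domKappa {X : Type} {H : Type} [NormedAddCommGroup H] [InnerProductSpace ℂ H]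
    [CompleteSpace H] (𝒳 : LFCMSpace X) (M : CoarseModule 𝒳 H) (κ : Cardinal) : Set X :=
  domKappaAt 𝒳 M 𝒳.disc κ

/-- A coarse module is faithful if its faithfulness domain is asymptotic to the whole space. -/
def IsFaithfulMod {X : Type} {H : Type} [NormedAddCommGroup H] [InnerProductSpace ℂ H]
    [CompleteSpace H] (𝒳 : LFCMSpace X) (M : CoarseModule 𝒳 H) : Prop :=
  𝒳.coarse.Asymptotic (domKappa 𝒳 M 1) Set.univ

/-- A coarse module is ample if its ampleness domain is asymptotic to the whole space. -/
def IsAmpleMod {X : Type} {H : Type} [NormedAddCommGroup H] [InnerProductSpace ℂ H]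
    [CompleteSpace H] (𝒳 : LFCMSpace X) (M : CoarseModule 𝒳 H) : Prop :=
  𝒳.coarse.Asymptotic (domKappa 𝒳 M Cardinal.aleph0) Set.univ

/-- The approximate relation `f^T_{δ,F,E}` of a bounded operator. -/
def approxRel [NormedAddCommGroup H₁] [InnerProductSpace ℂ H₁]
    [NormedAddCommGroup H₂] [InnerProductSpace ℂ H₂]
    (𝒳 : LFCMSpace X) (𝒴 : LFCMSpace Y)
    (pX : Set X → (H₁ →L[ℂ] H₁)) (pY : Set Y → (H₂ →L[ℂ] H₂))
    (T : H₁ →L[ℂ] H₂) (δ : ℝ) (F : Set (Y × Y)) (E : Set (X × X)) : Set (Y × X) :=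
  ⋃₀ {S | ∃ B A, S = B ×ˢ A ∧ B ∈ 𝒴.meas ∧ B ×ˢ B ⊆ F ∧
      A ∈ 𝒳.meas ∧ A ×ˢ A ⊆ E ∧ δ < ‖pY B ∘L T ∘L pX A‖}

/-- A unitary operator between Hilbert spaces. -/
def IsUnitaryOp [NormedAddCommGroup H₁] [InnerProductSpace ℂ H₁] [CompleteSpace H₁]
    [NormedAddCommGroup H₂] [InnerProductSpace ℂ H₂] [CompleteSpace H₂]
    (U : H₁ →L[ℂ] H₂) : Prop :=
  ContinuousLinearMap.adjoint U ∘L U = ContinuousLinearMap.id ℂ H₁ ∧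
    U ∘L ContinuousLinearMap.adjoint U = ContinuousLinearMap.id ℂ H₂

/-- A central unitary of the C*-algebra of approximable operators on a coarse module. -/
def IsCentralUnitary {X : Type} {H : Type} [NormedAddCommGroup H] [InnerProductSpace ℂ H]
    [CompleteSpace H] (𝒳 : LFCMSpace X) (M : CoarseModule 𝒳 H) (u : H →L[ℂ] H) : Prop :=
  Approximable 𝒳 M.proj M.proj u ∧ IsUnitaryOp u ∧
    ∀ t : H →L[ℂ] H, Approximable 𝒳 M.proj M.proj t → u ∘L t = t ∘L u

/-- Equivalence of operators modulo central unitaries. -/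
def CongruentModCentral {X : Type} [NormedAddCommGroup H₁] [InnerProductSpace ℂ H₁]
    [CompleteSpace H₁] [NormedAddCommGroup H₂] [InnerProductSpace ℂ H₂] [CompleteSpace H₂]
    (𝒳 : LFCMSpace X) (C : CoarseModule 𝒳 H₁) (D : CoarseModule 𝒳 H₂)
    (t s : H₁ →L[ℂ] H₂) : Prop :=
  ∃ u v, IsCentralUnitary 𝒳 C u ∧ IsCentralUnitary 𝒳 D v ∧ t = v ∘L s ∘L u

/-! ## Direct sums of modules -/

/-- The direct sum `T ⊕ S` of two operators, on the `ℓ²`-product of Hilbert spaces. -/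
def prodOp [NormedAddCommGroup H₀] [InnerProductSpace ℂ H₀]
    [NormedAddCommGroup H₁] [InnerProductSpace ℂ H₁]
    [NormedAddCommGroup H₂] [InnerProductSpace ℂ H₂]
    [NormedAddCommGroup H₃] [InnerProductSpace ℂ H₃]
    (T : H₀ →L[ℂ] H₂) (S : H₁ →L[ℂ] H₃) :
    WithLp 2 (H₀ × H₁) →L[ℂ] WithLp 2 (H₂ × H₃) :=
  (WithLp.prodContinuousLinearEquiv 2 ℂ H₂ H₃).symm.toContinuousLinearMap ∘L
    (T.prodMap S) ∘L (WithLp.prodContinuousLinearEquiv 2 ℂ H₀ H₁).toContinuousLinearMap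

/-- The canonical inclusion `H₀ → H₀ ⊕ H₁`. -/
def inlOp (H₀ H₁ : Type) [NormedAddCommGroup H₀] [InnerProductSpace ℂ H₀]
    [NormedAddCommGroup H₁] [InnerProductSpace ℂ H₁] :
    H₀ →L[ℂ] WithLp 2 (H₀ × H₁) :=
  (WithLp.prodContinuousLinearEquiv 2 ℂ H₀ H₁).symm.toContinuousLinearMap ∘L
    ContinuousLinearMap.inl ℂ H₀ H₁

/-- The canonical inclusion `H₁ → H₀ ⊕ H₁`. -/
def inrOp (H₀ H₁ : Type) [NormedAddCommGroup H₀] [InnerProductSpace ℂ H₀]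
    [NormedAddCommGroup H₁] [InnerProductSpace ℂ H₁] :
    H₁ →L[ℂ] WithLp 2 (H₀ × H₁) :=
  (WithLp.prodContinuousLinearEquiv 2 ℂ H₀ H₁).symm.toContinuousLinearMap ∘L
    ContinuousLinearMap.inr ℂ H₀ H₁

/-- The canonical projection `H₀ ⊕ H₁ → H₀`. -/
def fstOp (H₀ H₁ : Type) [NormedAddCommGroup H₀] [InnerProductSpace ℂ H₀]
    [NormedAddCommGroup H₁] [InnerProductSpace ℂ H₁] :
    WithLp 2 (H₀ × H₁) →L[ℂ] H₀ :=
  ContinuousLinearMap.fst ℂ H₀ H₁ ∘L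
    (WithLp.prodContinuousLinearEquiv 2 ℂ H₀ H₁).toContinuousLinearMap

/-- The canonical projection `H₀ ⊕ H₁ → H₁`. -/
def sndOp (H₀ H₁ : Type) [NormedAddCommGroup H₀] [InnerProductSpace ℂ H₀]
    [NormedAddCommGroup H₁] [InnerProductSpace ℂ H₁] :
    WithLp 2 (H₀ × H₁) →L[ℂ] H₁ :=
  ContinuousLinearMap.snd ℂ H₀ H₁ ∘L
    (WithLp.prodContinuousLinearEquiv 2 ℂ H₀ H₁).toContinuousLinearMap

/-- `M` is the direct sum of the coarse modules `C₀` and `C₁`. -/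
def IsDirectSum {X : Type} [NormedAddCommGroup H₀] [InnerProductSpace ℂ H₀] [CompleteSpace H₀]
    [NormedAddCommGroup H₁] [InnerProductSpace ℂ H₁] [CompleteSpace H₁]
    (𝒳 : LFCMSpace X) (C₀ : CoarseModule 𝒳 H₀) (C₁ : CoarseModule 𝒳 H₁)
    (M : CoarseModule 𝒳 (WithLp 2 (H₀ × H₁))) : Prop :=
  ∀ A : Set X, M.proj A = prodOp (C₀.proj A) (C₁.proj A)

/-! ## Bundled modules and *-functors -/

/-- A coarse module over `𝒳` bundled together with its Hilbert space; the objects of the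
approximable category `𝒜(𝒳)`. -/
structure BundledModule {X : Type} (𝒳 : LFCMSpace X) where
  H : Type
  [instNorm : NormedAddCommGroup H]
  [instInner : InnerProductSpace ℂ H]
  [instComplete : CompleteSpace H]
  mod : CoarseModule 𝒳 H

attribute [instance] BundledModule.instNorm BundledModule.instInner BundledModule.instComplete

/-- A *-functor `𝒜(𝒳) → 𝒜(𝒴)` between approximable categories: a map on objects together
with a ℂ-linear, multiplicative, adjoint-preserving map on approximable operators. -/
structure StarFunctor {X Y : Type} (𝒳 : LFCMSpace X) (𝒴 : LFCMSpace Y) where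
  obj : BundledModule 𝒳 → BundledModule 𝒴
  map : ∀ {C D : BundledModule 𝒳} (t : C.H →L[ℂ] D.H),
      Approximable 𝒳 C.mod.proj D.mod.proj t → ((obj C).H →L[ℂ] (obj D).H)
  map_approximable : ∀ {C D : BundledModule 𝒳} (t : C.H →L[ℂ] D.H)
      (ht : Approximable 𝒳 C.mod.proj D.mod.proj t),
      Approximable 𝒴 (obj C).mod.proj (obj D).mod.proj (map t ht)
  map_id : ∀ (C : BundledModule 𝒳)
      (h : Approximable 𝒳 C.mod.proj C.mod.proj (ContinuousLinearMap.id ℂ C.H)),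
      map (ContinuousLinearMap.id ℂ C.H) h = ContinuousLinearMap.id ℂ (obj C).H
  map_comp : ∀ {C D G : BundledModule 𝒳} (t : C.H →L[ℂ] D.H) (s : D.H →L[ℂ] G.H)
      (ht : Approximable 𝒳 C.mod.proj D.mod.proj t)
      (hs : Approximable 𝒳 D.mod.proj G.mod.proj s)
      (hst : Approximable 𝒳 C.mod.proj G.mod.proj (s ∘L t)),
      map (s ∘L t) hst = map s hs ∘L map t ht
  map_add : ∀ {C D : BundledModule 𝒳} (t s : C.H →L[ℂ] D.H)
      (ht : Approximable 𝒳 C.mod.proj D.mod.proj t)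
      (hs : Approximable 𝒳 C.mod.proj D.mod.proj s)
      (hts : Approximable 𝒳 C.mod.proj D.mod.proj (t + s)),
      map (t + s) hts = map t ht + map s hs
  map_smul : ∀ {C D : BundledModule 𝒳} (c : ℂ) (t : C.H →L[ℂ] D.H)
      (ht : Approximable 𝒳 C.mod.proj D.mod.proj t)
      (hct : Approximable 𝒳 C.mod.proj D.mod.proj (c • t)),
      map (c • t) hct = c • map t ht
  map_star : ∀ {C D : BundledModule 𝒳} (t : C.H →L[ℂ] D.H)
      (ht : Approximable 𝒳 C.mod.proj D.mod.proj t)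
      (hstar : Approximable 𝒳 D.mod.proj C.mod.proj (ContinuousLinearMap.adjoint t)),
      map (ContinuousLinearMap.adjoint t) hstar = ContinuousLinearMap.adjoint (map t ht)

namespace StarFunctor

variable {𝒳 : LFCMSpace X} {𝒴 : LFCMSpace Y}

/-- A full functor. -/
def Full (F : StarFunctor 𝒳 𝒴) : Prop :=
  ∀ (C D : BundledModule 𝒳) (s : (F.obj C).H →L[ℂ] (F.obj D).H),
    Approximable 𝒴 (F.obj C).mod.proj (F.obj D).mod.proj s →
    ∃ (t : C.H →L[ℂ] D.H) (ht : Approximable 𝒳 C.mod.proj D.mod.proj t), F.map t ht = s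

/-- A faithful functor. -/
def Faithful (F : StarFunctor 𝒳 𝒴) : Prop :=
  ∀ (C D : BundledModule 𝒳) (t t' : C.H →L[ℂ] D.H)
    (ht : Approximable 𝒳 C.mod.proj D.mod.proj t)
    (ht' : Approximable 𝒳 C.mod.proj D.mod.proj t'),
    F.map t ht = F.map t' ht' → t = t'

/-- An essentially surjective functor (up to isomorphism in the approximable category). -/
def EssSurj (F : StarFunctor 𝒳 𝒴) : Prop :=
  ∀ D' : BundledModule 𝒴, ∃ C : BundledModule 𝒳,
    ∃ u : (F.obj C).H →L[ℂ] D'.H, Approximable 𝒴 (F.obj C).mod.proj D'.mod.proj u ∧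
    ∃ v : D'.H →L[ℂ] (F.obj C).H, Approximable 𝒴 D'.mod.proj (F.obj C).mod.proj v ∧
      v ∘L u = ContinuousLinearMap.id ℂ (F.obj C).H ∧
      u ∘L v = ContinuousLinearMap.id ℂ D'.H

/-- A unitary `U` implements the *-isomorphism induced by `F` on the endomorphism algebra of
a module `C`. -/
def Implements (F : StarFunctor 𝒳 𝒴) (C : BundledModule 𝒳)
    (U : C.H →L[ℂ] (F.obj C).H) : Prop :=
  IsUnitaryOp U ∧ ∀ (t : C.H →L[ℂ] C.H) (ht : Approximable 𝒳 C.mod.proj C.mod.proj t),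
    F.map t ht = U ∘L t ∘L ContinuousLinearMap.adjoint U

end StarFunctor

/-- The graph of a map, as a relation `⊆ Y × X`. -/
def mapGraph {X Y : Type} (f : X → Y) : Set (Y × X) := {p | p.1 = f p.2}

/-- A relation `R ⊆ Y × X` is a coarse equivalence from `DX ⊆ X` to `DY ⊆ Y` (each with the
subspace coarse structure): controlled in both directions, densely defined and coarsely
surjective relative to `DX` and `DY`. -/
def IsRelCoarseEquivOn {X Y : Type} (CX : CoarseSpace X) (CY : CoarseSpace Y)
    (DX : Set X) (DY : Set Y) (R : Set (Y × X)) : Prop :=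
  (∀ E ∈ CX.entourages, RelComp R (RelComp E (RelTrans R)) ∈ CY.entourages) ∧
  (∀ F ∈ CY.entourages, RelComp (RelTrans R) (RelComp F R) ∈ CX.entourages) ∧
  CX.Asymptotic (Prod.snd '' R) DX ∧ CY.Asymptotic (Prod.fst '' R) DY

/-- `S ⊆ X × Y` is a coarse inverse of the relation `R ⊆ Y × X` between `DX` and `DY`:
both compositions are asymptotic to the respective (restricted) diagonals. -/
def IsRelCoarseInverseOn {X Y : Type} (CX : CoarseSpace X) (CY : CoarseSpace Y)
    (DX : Set X) (DY : Set Y) (R : Set (Y × X)) (S : Set (X × Y)) : Prop :=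
  RelAsymp CX CX (RelComp S R) {p : X × X | p.1 = p.2 ∧ p.1 ∈ DX} ∧
  RelAsymp CY CY (RelComp R S) {p : Y × Y | p.1 = p.2 ∧ p.1 ∈ DY}

/-- The statement that a coarse map `f` represents the coarse embedding induced by a full and
faithful *-functor `F` via approximate relations of implementing unitaries. -/
def RepresentsInducedEmbedding {X Y : Type} {𝒳 : LFCMSpace X} {𝒴 : LFCMSpace Y}
    (F : StarFunctor 𝒳 𝒴) (f : X → Y) : Prop :=
  ∀ (C : BundledModule 𝒳), IsFaithfulMod 𝒳 C.mod →
  ∀ (U : C.H →L[ℂ] (F.obj C).H), F.Implements C U →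
  ∀ δ : ℝ, 0 < δ → δ < 1 →
  ∃ F₀ ∈ 𝒴.coarse.entourages, ∃ E₀ ∈ 𝒳.coarse.entourages,
    ∀ F' ∈ 𝒴.coarse.entourages, F₀ ⊆ F' → ∀ E ∈ 𝒳.coarse.entourages, E₀ ⊆ E →
      RelAsymp 𝒳.coarse 𝒴.coarse
        (approxRel 𝒳 𝒴 C.mod.proj (F.obj C).mod.proj U δ F' E) (mapGraph f)

/-- Bundle a coarse module into an object of the approximable category. -/
abbrev BundledModule.ofModule {X : Type} {𝒳 : LFCMSpace X} {H : Type} [NormedAddCommGroup H]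
    [InnerProductSpace ℂ H] [CompleteSpace H] (M : CoarseModule 𝒳 H) : BundledModule 𝒳 :=
  ⟨H, M⟩

theorem LFCMSpace.disc_mem {X : Type} (𝒳 : LFCMSpace X) :
    𝒳.disc ∈ 𝒳.coarse.entourages := by
  obtain ⟨E, hE, hEP⟩ := 𝒳.isPartition.controlled
  refine 𝒳.coarse.mem_of_subset hE.1 ?_
  intro p hp
  simp only [LFCMSpace.disc, Set.mem_iUnion] at hp
  obtain ⟨A, hA, hpA⟩ := hp
  exact hEP A hA hpA

theorem prodOp_comp_inlOp {H₀ H₁ H₂ H₃ : Type}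
    [NormedAddCommGroup H₀] [InnerProductSpace ℂ H₀]
    [NormedAddCommGroup H₁] [InnerProductSpace ℂ H₁]
    [NormedAddCommGroup H₂] [InnerProductSpace ℂ H₂]
    [NormedAddCommGroup H₃] [InnerProductSpace ℂ H₃]
    (T : H₀ →L[ℂ] H₂) (S : H₁ →L[ℂ] H₃) :
    prodOp T S ∘L inlOp H₀ H₁ = inlOp H₂ H₃ ∘L T := by
  ext x
  simp [prodOp, inlOp]

theorem prodOp_comp_inrOp {H₀ H₁ H₂ H₃ : Type}
    [NormedAddCommGroup H₀] [InnerProductSpace ℂ H₀]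
    [NormedAddCommGroup H₁] [InnerProductSpace ℂ H₁]
    [NormedAddCommGroup H₂] [InnerProductSpace ℂ H₂]
    [NormedAddCommGroup H₃] [InnerProductSpace ℂ H₃]
    (T : H₀ →L[ℂ] H₂) (S : H₁ →L[ℂ] H₃) :
    prodOp T S ∘L inrOp H₀ H₁ = inrOp H₂ H₃ ∘L S := by
  ext x
  simp [prodOp, inrOp]

/-- The canonical inclusion into a direct sum of coarse modules is approximable
(indeed it has controlled propagation). -/
theorem IsDirectSum.approximable_inl {X : Type} {H₀ H₁ : Type}
    [NormedAddCommGroup H₀] [InnerProductSpace ℂ H₀] [CompleteSpace H₀]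
    [NormedAddCommGroup H₁] [InnerProductSpace ℂ H₁] [CompleteSpace H₁]
    {𝒳 : LFCMSpace X} {C₀ : CoarseModule 𝒳 H₀} {C₁ : CoarseModule 𝒳 H₁}
    {M : CoarseModule 𝒳 (WithLp 2 (H₀ × H₁))} (hM : IsDirectSum 𝒳 C₀ C₁ M) :
    Approximable 𝒳 C₀.proj M.proj (inlOp H₀ H₁) := by
  intro ε hε
  refine ⟨inlOp H₀ H₁, ?_, by simp [hε.le]⟩
  refine 𝒳.coarse.mem_of_subset (𝒳.coarse.comp_mem 𝒳.disc_mem 𝒳.disc_mem) ?_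
  rintro ⟨y, x⟩ hyx
  obtain ⟨s, ⟨B, A, rfl, hBmeas, hBb, hAmeas, hAb, hne⟩, hmem⟩ := hyx
  have key : M.proj B ∘L inlOp H₀ H₁ ∘L C₀.proj A
      = inlOp H₀ H₁ ∘L C₀.proj (B ∩ A) := by
    rw [C₀.proj_inter hBmeas hAmeas, hM B, ← ContinuousLinearMap.comp_assoc,
      prodOp_comp_inlOp, ContinuousLinearMap.comp_assoc]
  have hBA : (B ∩ A).Nonempty := by
    by_contra h
    rw [Set.not_nonempty_iff_eq_empty] at h
    apply hne
    rw [key, h, C₀.proj_empty]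
    ext z
    simp
  obtain ⟨z, hzB, hzA⟩ := hBA
  obtain ⟨hyB, hxA⟩ := hmem
  exact ⟨z, hBb ⟨hyB, hzB⟩, hAb ⟨hzA, hxA⟩⟩

theorem IsDirectSum.approximable_inr {X : Type} {H₀ H₁ : Type}
    [NormedAddCommGroup H₀] [InnerProductSpace ℂ H₀] [CompleteSpace H₀]
    [NormedAddCommGroup H₁] [InnerProductSpace ℂ H₁] [CompleteSpace H₁]
    {𝒳 : LFCMSpace X} {C₀ : CoarseModule 𝒳 H₀} {C₁ : CoarseModule 𝒳 H₁}
    {M : CoarseModule 𝒳 (WithLp 2 (H₀ × H₁))} (hM : IsDirectSum 𝒳 C₀ C₁ M) :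
    Approximable 𝒳 C₁.proj M.proj (inrOp H₀ H₁) := by
  intro ε hε
  refine ⟨inrOp H₀ H₁, ?_, by simp [hε.le]⟩
  refine 𝒳.coarse.mem_of_subset (𝒳.coarse.comp_mem 𝒳.disc_mem 𝒳.disc_mem) ?_
  rintro ⟨y, x⟩ hyx
  obtain ⟨s, ⟨B, A, rfl, hBmeas, hBb, hAmeas, hAb, hne⟩, hmem⟩ := hyx
  have key : M.proj B ∘L inrOp H₀ H₁ ∘L C₁.proj A
      = inrOp H₀ H₁ ∘L C₁.proj (B ∩ A) := by
    rw [C₁.proj_inter hBmeas hAmeas, hM B, ← ContinuousLinearMap.comp_assoc,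
      prodOp_comp_inrOp, ContinuousLinearMap.comp_assoc]
  have hBA : (B ∩ A).Nonempty := by
    by_contra h
    rw [Set.not_nonempty_iff_eq_empty] at h
    apply hne
    rw [key, h, C₁.proj_empty]
    ext z
    simp
  obtain ⟨z, hzB, hzA⟩ := hBA
  obtain ⟨hyB, hxA⟩ := hmem
  exact ⟨z, hBb ⟨hyB, hzB⟩, hAb ⟨hzA, hxA⟩⟩
section Aux

open ContinuousLinearMap

theorem LFCMSpace.inter_mem {X : Type} (𝒳 : LFCMSpace X) {A B : Set X}
    (hA : A ∈ 𝒳.meas) (hB : B ∈ 𝒳.meas) : A ∩ B ∈ 𝒳.meas := by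
  have h := 𝒳.compl_mem (𝒳.union_mem (𝒳.compl_mem hA) (𝒳.compl_mem hB))
  rwa [Set.compl_union, compl_compl, compl_compl] at h

variable {X : Type} {H₀ H₁ H₂ K₁ K₂ : Type}
  [NormedAddCommGroup H₀] [InnerProductSpace ℂ H₀]
  [NormedAddCommGroup H₁] [InnerProductSpace ℂ H₁]
  [NormedAddCommGroup H₂] [InnerProductSpace ℂ H₂]
  [NormedAddCommGroup K₁] [InnerProductSpace ℂ K₁]
  [NormedAddCommGroup K₂] [InnerProductSpace ℂ K₂]

theorem approximable_of_controlled (𝒳 : LFCMSpace X)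
    (pX : Set X → (H₁ →L[ℂ] H₁)) (pY : Set X → (H₂ →L[ℂ] H₂)) {r : H₁ →L[ℂ] H₂}
    (h : HasControlledPropagation 𝒳 pX pY r) : Approximable 𝒳 pX pY r :=
  fun ε hε => ⟨r, h, by simp [hε.le]⟩

theorem hasControlledPropagation_of_nonempty (𝒳 : LFCMSpace X)
    (pX : Set X → (H₁ →L[ℂ] H₁)) (pY : Set X → (H₂ →L[ℂ] H₂)) (r : H₁ →L[ℂ] H₂)
    (h : ∀ B A : Set X, B ∈ 𝒳.meas → A ∈ 𝒳.meas →
      pY B ∘L r ∘L pX A ≠ 0 → (B ∩ A).Nonempty) :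
    HasControlledPropagation 𝒳 pX pY r := by
  refine 𝒳.coarse.mem_of_subset (𝒳.coarse.comp_mem 𝒳.disc_mem 𝒳.disc_mem) ?_
  rintro ⟨y, x⟩ hyx
  obtain ⟨s, ⟨B, A, rfl, hBmeas, hBb, hAmeas, hAb, hne⟩, hyB, hxA⟩ := hyx
  obtain ⟨z, hzB, hzA⟩ := h B A hBmeas hAmeas hne
  exact ⟨z, hBb ⟨hyB, hzB⟩, hAb ⟨hzA, hxA⟩⟩

theorem approx_id_mod (𝒳 : LFCMSpace X) [CompleteSpace H₁] (P : CoarseModule 𝒳 H₁) :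
    Approximable 𝒳 P.proj P.proj (ContinuousLinearMap.id ℂ H₁) := by
  refine approximable_of_controlled 𝒳 _ _
    (hasControlledPropagation_of_nonempty 𝒳 _ _ _ ?_)
  intro B A hB hA hne
  by_contra h
  rw [Set.not_nonempty_iff_eq_empty] at h
  apply hne
  rw [ContinuousLinearMap.id_comp, ← P.proj_inter hB hA, h, P.proj_empty]

theorem approx_proj_mod (𝒳 : LFCMSpace X) [CompleteSpace H₁] (P : CoarseModule 𝒳 H₁)
    {A₀ : Set X} (hA₀ : A₀ ∈ 𝒳.meas) :
    Approximable 𝒳 P.proj P.proj (P.proj A₀) := by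
  refine approximable_of_controlled 𝒳 _ _
    (hasControlledPropagation_of_nonempty 𝒳 _ _ _ ?_)
  intro B A hB hA hne
  by_contra h
  rw [Set.not_nonempty_iff_eq_empty] at h
  apply hne
  rw [← P.proj_inter hA₀ hA, ← P.proj_inter hB (𝒳.inter_mem hA₀ hA)]
  have : B ∩ (A₀ ∩ A) = ∅ := by
    apply Set.eq_empty_of_subset_empty
    rw [← h]
    exact fun x hx => ⟨hx.1, hx.2.2⟩
  rw [this, P.proj_empty]

/-- The key "sandwich" lemma: conjugating an approximable operator by contractions
that intertwine the projections yields an approximable operator. -/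
theorem approximable_sandwich (𝒳 : LFCMSpace X)
    (pX : Set X → (H₁ →L[ℂ] H₁)) (pY : Set X → (H₂ →L[ℂ] H₂))
    (qX : Set X → (K₁ →L[ℂ] K₁)) (qY : Set X → (K₂ →L[ℂ] K₂))
    (Lin : H₁ →L[ℂ] K₁) (Lout : K₂ →L[ℂ] H₂)
    (hin : ∀ A ∈ 𝒳.meas, Lin ∘L pX A = qX A ∘L Lin)
    (hout : ∀ B ∈ 𝒳.meas, pY B ∘L Lout = Lout ∘L qY B)
    (hnin : ‖Lin‖ ≤ 1) (hnout : ‖Lout‖ ≤ 1)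
    {s : K₁ →L[ℂ] K₂} (hs : Approximable 𝒳 qX qY s) :
    Approximable 𝒳 pX pY (Lout ∘L s ∘L Lin) := by
  have sandwich : ∀ (r : K₁ →L[ℂ] K₂) (B A : Set X), B ∈ 𝒳.meas → A ∈ 𝒳.meas →
      pY B ∘L (Lout ∘L r ∘L Lin) ∘L pX A = Lout ∘L (qY B ∘L r ∘L qX A) ∘L Lin := by
    intro r B A hB hA
    ext x
    simp only [ContinuousLinearMap.comp_apply]
    rw [show Lin (pX A x) = qX A (Lin x) from DFunLike.congr_fun (hin A hA) x,
      show pY B (Lout (r (qX A (Lin x)))) = Lout (qY B (r (qX A (Lin x)))) from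
        DFunLike.congr_fun (hout B hB) _]
  intro ε hε
  obtain ⟨s', hs', hnorm⟩ := hs ε hε
  refine ⟨Lout ∘L s' ∘L Lin, ?_, ?_⟩
  · refine 𝒳.coarse.mem_of_subset hs' ?_
    rintro p ⟨S, ⟨B, A, rfl, h1, h2, h3, h4, hne⟩, hp⟩
    refine ⟨B ×ˢ A, ⟨B, A, rfl, h1, h2, h3, h4, ?_⟩, hp⟩
    intro h0
    apply hne
    rw [sandwich s' B A h1 h3, h0]
    ext x
    simp
  · have heq : Lout ∘L s ∘L Lin - Lout ∘L s' ∘L Lin = Lout ∘L (s - s') ∘L Lin := by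
      ext x; simp
    rw [heq]
    calc ‖Lout ∘L (s - s') ∘L Lin‖ ≤ ‖Lout‖ * ‖(s - s') ∘L Lin‖ :=
          Lout.opNorm_comp_le ((s - s') ∘L Lin)
      _ ≤ ‖Lout‖ * (‖s - s'‖ * ‖Lin‖) :=
          mul_le_mul_of_nonneg_left ((s - s').opNorm_comp_le Lin) (norm_nonneg Lout)
      _ ≤ 1 * (ε * 1) := by
          have h2 := norm_nonneg Lin
          have h4 : ‖s - s'‖ * ‖Lin‖ ≤ ε * 1 := mul_le_mul hnorm hnin h2 hε.le
          exact mul_le_mul hnout h4 (by positivity) (by norm_num)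
      _ = ε := by ring

end Aux
section Prod

open ContinuousLinearMap

variable {X : Type} {H₀ H₁ H₂ H₃ : Type}
  [NormedAddCommGroup H₀] [InnerProductSpace ℂ H₀]
  [NormedAddCommGroup H₁] [InnerProductSpace ℂ H₁]
  [NormedAddCommGroup H₂] [InnerProductSpace ℂ H₂]
  [NormedAddCommGroup H₃] [InnerProductSpace ℂ H₃]

theorem fstOp_comp_prodOp (T : H₀ →L[ℂ] H₂) (S : H₁ →L[ℂ] H₃) :
    fstOp H₂ H₃ ∘L prodOp T S = T ∘L fstOp H₀ H₁ := by
  ext x; simp [prodOp, fstOp]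

theorem sndOp_comp_prodOp (T : H₀ →L[ℂ] H₂) (S : H₁ →L[ℂ] H₃) :
    sndOp H₂ H₃ ∘L prodOp T S = S ∘L sndOp H₀ H₁ := by
  ext x; simp [prodOp, sndOp]

theorem prodOp_comp_prodOp {K₀ K₁ : Type}
    [NormedAddCommGroup K₀] [InnerProductSpace ℂ K₀]
    [NormedAddCommGroup K₁] [InnerProductSpace ℂ K₁]
    (T : H₂ →L[ℂ] K₀) (S : H₃ →L[ℂ] K₁) (T' : H₀ →L[ℂ] H₂) (S' : H₁ →L[ℂ] H₃) :
    prodOp T S ∘L prodOp T' S' = prodOp (T ∘L T') (S ∘L S') := by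
  ext x; simp [prodOp, Prod.map]

theorem prodOp_add (T T' : H₀ →L[ℂ] H₂) (S S' : H₁ →L[ℂ] H₃) :
    prodOp (T + T') (S + S') = prodOp T S + prodOp T' S' := by
  ext x <;> simp [prodOp, Prod.map, ← WithLp.toLp_add, Prod.mk_add_mk]

theorem prodOp_zero : prodOp (0 : H₀ →L[ℂ] H₂) (0 : H₁ →L[ℂ] H₃) = 0 := by
  ext x
  show (WithLp.equiv 2 (H₂ × H₃)).symm _ = 0
  simp [prodOp, Prod.map]

theorem inlOp_fst (v : H₀) : (inlOp H₀ H₁ v).fst = v := rfl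
theorem inlOp_snd (v : H₀) : (inlOp H₀ H₁ v).snd = 0 := rfl
theorem inrOp_fst (v : H₁) : (inrOp H₀ H₁ v).fst = 0 := rfl
theorem inrOp_snd (v : H₁) : (inrOp H₀ H₁ v).snd = v := rfl
theorem fstOp_apply (z : WithLp 2 (H₀ × H₁)) : fstOp H₀ H₁ z = z.fst := rfl
theorem sndOp_apply (z : WithLp 2 (H₀ × H₁)) : sndOp H₀ H₁ z = z.snd := rfl
theorem prodOp_apply_fst (T : H₀ →L[ℂ] H₂) (S : H₁ →L[ℂ] H₃) (z : WithLp 2 (H₀ × H₁)) :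
    (prodOp T S z).fst = T z.fst := rfl
theorem prodOp_apply_snd (T : H₀ →L[ℂ] H₂) (S : H₁ →L[ℂ] H₃) (z : WithLp 2 (H₀ × H₁)) :
    (prodOp T S z).snd = S z.snd := rfl

theorem norm_fstOp_apply_le (z : WithLp 2 (H₀ × H₁)) : ‖fstOp H₀ H₁ z‖ ≤ ‖z‖ := by
  have h := WithLp.prod_norm_sq_eq_of_L2 z
  have h1 : ‖fstOp H₀ H₁ z‖ ^ 2 ≤ ‖z‖ ^ 2 := by
    rw [h, fstOp_apply]; nlinarith [sq_nonneg ‖z.snd‖]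
  nlinarith [norm_nonneg (fstOp H₀ H₁ z), norm_nonneg z]

theorem norm_sndOp_apply_le (z : WithLp 2 (H₀ × H₁)) : ‖sndOp H₀ H₁ z‖ ≤ ‖z‖ := by
  have h := WithLp.prod_norm_sq_eq_of_L2 z
  have h1 : ‖sndOp H₀ H₁ z‖ ^ 2 ≤ ‖z‖ ^ 2 := by
    rw [h, sndOp_apply]; nlinarith [sq_nonneg ‖z.fst‖]
  nlinarith [norm_nonneg (sndOp H₀ H₁ z), norm_nonneg z]

theorem norm_inlOp_apply (v : H₀) : ‖inlOp H₀ H₁ v‖ = ‖v‖ := by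
  have h := WithLp.prod_norm_sq_eq_of_L2 (inlOp H₀ H₁ v)
  rw [inlOp_fst, inlOp_snd, norm_zero] at h
  nlinarith [norm_nonneg (inlOp H₀ H₁ v), norm_nonneg v]

theorem norm_inrOp_apply (v : H₁) : ‖inrOp H₀ H₁ v‖ = ‖v‖ := by
  have h := WithLp.prod_norm_sq_eq_of_L2 (inrOp H₀ H₁ v)
  rw [inrOp_fst, inrOp_snd, norm_zero] at h
  nlinarith [norm_nonneg (inrOp H₀ H₁ v), norm_nonneg v]

theorem norm_inlOp_le : ‖inlOp H₀ H₁‖ ≤ 1 :=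
  ContinuousLinearMap.opNorm_le_bound _ zero_le_one fun v => by
    rw [norm_inlOp_apply, one_mul]

theorem norm_inrOp_le : ‖inrOp H₀ H₁‖ ≤ 1 :=
  ContinuousLinearMap.opNorm_le_bound _ zero_le_one fun v => by
    rw [norm_inrOp_apply, one_mul]

theorem norm_fstOp_le : ‖fstOp H₀ H₁‖ ≤ 1 :=
  ContinuousLinearMap.opNorm_le_bound _ zero_le_one fun v => by
    rw [one_mul]; exact norm_fstOp_apply_le v

theorem norm_sndOp_le : ‖sndOp H₀ H₁‖ ≤ 1 :=
  ContinuousLinearMap.opNorm_le_bound _ zero_le_one fun v => by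
    rw [one_mul]; exact norm_sndOp_apply_le v

variable [CompleteSpace H₀] [CompleteSpace H₁] [CompleteSpace H₂] [CompleteSpace H₃]

theorem adjoint_prodOp (T : H₀ →L[ℂ] H₂) (S : H₁ →L[ℂ] H₃) :
    ContinuousLinearMap.adjoint (prodOp T S) = prodOp (adjoint T) (adjoint S) := by
  symm
  rw [eq_adjoint_iff]
  intro x y
  simp only [WithLp.prod_inner_apply, WithLp.ofLp_fst, WithLp.ofLp_snd, prodOp_apply_fst,
    prodOp_apply_snd, adjoint_inner_left]

theorem adjoint_inlOp : ContinuousLinearMap.adjoint (inlOp H₀ H₁) = fstOp H₀ H₁ := by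
  symm
  rw [eq_adjoint_iff]
  intro x y
  simp [WithLp.prod_inner_apply, fstOp_apply, inlOp_fst, inlOp_snd]

theorem adjoint_inrOp : ContinuousLinearMap.adjoint (inrOp H₀ H₁) = sndOp H₀ H₁ := by
  symm
  rw [eq_adjoint_iff]
  intro x y
  simp [WithLp.prod_inner_apply, sndOp_apply, inrOp_fst, inrOp_snd]

theorem adjoint_fstOp : ContinuousLinearMap.adjoint (fstOp H₀ H₁) = inlOp H₀ H₁ := by
  rw [← adjoint_inlOp, adjoint_adjoint]

theorem adjoint_sndOp : ContinuousLinearMap.adjoint (sndOp H₀ H₁) = inrOp H₀ H₁ := by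
  rw [← adjoint_inrOp, adjoint_adjoint]

theorem comp_congr {E F G : Type}
    [NormedAddCommGroup E] [InnerProductSpace ℂ E]
    [NormedAddCommGroup F] [InnerProductSpace ℂ F]
    [NormedAddCommGroup G] [InnerProductSpace ℂ G]
    {f₁ f₂ : F →L[ℂ] G} {g₁ g₂ : E →L[ℂ] F} (hf : f₁ = f₂) (hg : g₁ = g₂) :
    f₁ ∘L g₁ = f₂ ∘L g₂ := by rw [hf, hg]

end Prod
section ProdModule

open ContinuousLinearMap

variable {X : Type} {H₀ H₁ : Type}
  [NormedAddCommGroup H₀] [InnerProductSpace ℂ H₀] [CompleteSpace H₀]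
  [NormedAddCommGroup H₁] [InnerProductSpace ℂ H₁] [CompleteSpace H₁]

theorem decomp_withLp (z : WithLp 2 (H₀ × H₁)) :
    inlOp H₀ H₁ z.fst + inrOp H₀ H₁ z.snd = z := by
  apply (WithLp.prodContinuousLinearEquiv 2 ℂ H₀ H₁).injective
  apply Prod.ext <;>
    simp [WithLp.ofLp_fst, WithLp.ofLp_snd, inlOp_fst, inlOp_snd, inrOp_fst, inrOp_snd]

/-- The direct sum of two coarse modules. -/
def prodModule (𝒳 : LFCMSpace X) (C₀ : CoarseModule 𝒳 H₀) (C₁ : CoarseModule 𝒳 H₁) :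
    CoarseModule 𝒳 (WithLp 2 (H₀ × H₁)) where
  proj A := prodOp (C₀.proj A) (C₁.proj A)
  proj_empty := by rw [C₀.proj_empty, C₁.proj_empty, prodOp_zero]
  proj_selfAdjoint A hA := by
    rw [ContinuousLinearMap.isSelfAdjoint_iff', adjoint_prodOp,
      ContinuousLinearMap.isSelfAdjoint_iff'.1 (C₀.proj_selfAdjoint A hA),
      ContinuousLinearMap.isSelfAdjoint_iff'.1 (C₁.proj_selfAdjoint A hA)]
  proj_inter {A B} hA hB := by
    rw [C₀.proj_inter hA hB, C₁.proj_inter hA hB, prodOp_comp_prodOp]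
  proj_union {A B} hA hB hAB := by
    rw [C₀.proj_union hA hB hAB, C₁.proj_union hA hB hAB, prodOp_add]
  nondeg := by
    rw [Metric.dense_iff]
    intro z r hr
    have h₀ := Metric.dense_iff.1 C₀.nondeg z.fst (r / 2) (by linarith)
    have h₁ := Metric.dense_iff.1 C₁.nondeg z.snd (r / 2) (by linarith)
    obtain ⟨a, ha_ball, ha_mem⟩ := h₀
    obtain ⟨b, hb_ball, hb_mem⟩ := h₁
    refine ⟨inlOp H₀ H₁ a + inrOp H₀ H₁ b, ?_, ?_⟩
    · rw [Metric.mem_ball, dist_eq_norm']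
      have : z - (inlOp H₀ H₁ a + inrOp H₀ H₁ b)
          = inlOp H₀ H₁ (z.fst - a) + inrOp H₀ H₁ (z.snd - b) := by
        rw [map_sub, map_sub]
        nth_rewrite 1 [← decomp_withLp z]
        abel
      rw [this]
      calc ‖inlOp H₀ H₁ (z.fst - a) + inrOp H₀ H₁ (z.snd - b)‖
          ≤ ‖inlOp H₀ H₁ (z.fst - a)‖ + ‖inrOp H₀ H₁ (z.snd - b)‖ := norm_add_le _ _
        _ = ‖z.fst - a‖ + ‖z.snd - b‖ := by rw [norm_inlOp_apply, norm_inrOp_apply]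
        _ < r / 2 + r / 2 := by
            rw [Metric.mem_ball, dist_comm, dist_eq_norm] at ha_ball hb_ball
            exact add_lt_add ha_ball hb_ball
        _ = r := by ring
    · -- membership in the span
      have key : ∀ (w₀ : H₀) (w₁ : H₁),
          w₀ ∈ Submodule.span ℂ (⋃ A ∈ {A | A ∈ 𝒳.meas ∧ 𝒳.coarse.IsBounded A},
            Set.range (C₀.proj A)) →
          w₁ ∈ Submodule.span ℂ (⋃ A ∈ {A | A ∈ 𝒳.meas ∧ 𝒳.coarse.IsBounded A},
            Set.range (C₁.proj A)) →
          inlOp H₀ H₁ w₀ + inrOp H₀ H₁ w₁ ∈ Submodule.span ℂ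
            (⋃ A ∈ {A | A ∈ 𝒳.meas ∧ 𝒳.coarse.IsBounded A},
              Set.range (prodOp (C₀.proj A) (C₁.proj A))) := by
        intro w₀ w₁ hw₀ hw₁
        apply Submodule.add_mem
        · have h1 : inlOp H₀ H₁ w₀ ∈ Submodule.map (inlOp H₀ H₁ : H₀ →ₗ[ℂ] _)
              (Submodule.span ℂ (⋃ A ∈ {A | A ∈ 𝒳.meas ∧ 𝒳.coarse.IsBounded A},
                Set.range (C₀.proj A))) := Submodule.mem_map_of_mem hw₀
          rw [Submodule.map_span] at h1
          refine Submodule.span_mono ?_ h1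
          rintro _ ⟨_, ⟨_, ⟨A, rfl⟩, _, ⟨hA, rfl⟩, ⟨ξ, rfl⟩⟩, rfl⟩
          refine Set.mem_iUnion.2 ⟨A, Set.mem_iUnion.2 ⟨hA, ⟨inlOp H₀ H₁ ξ, ?_⟩⟩⟩
          have h2 := DFunLike.congr_fun (prodOp_comp_inlOp (C₀.proj A) (C₁.proj A)) ξ
          simp only [ContinuousLinearMap.comp_apply] at h2
          exact h2
        · have h1 : inrOp H₀ H₁ w₁ ∈ Submodule.map (inrOp H₀ H₁ : H₁ →ₗ[ℂ] _)
              (Submodule.span ℂ (⋃ A ∈ {A | A ∈ 𝒳.meas ∧ 𝒳.coarse.IsBounded A},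
                Set.range (C₁.proj A))) := Submodule.mem_map_of_mem hw₁
          rw [Submodule.map_span] at h1
          refine Submodule.span_mono ?_ h1
          rintro _ ⟨_, ⟨_, ⟨A, rfl⟩, _, ⟨hA, rfl⟩, ⟨ξ, rfl⟩⟩, rfl⟩
          refine Set.mem_iUnion.2 ⟨A, Set.mem_iUnion.2 ⟨hA, ⟨inrOp H₀ H₁ ξ, ?_⟩⟩⟩
          have h2 := DFunLike.congr_fun (prodOp_comp_inrOp (C₀.proj A) (C₁.proj A)) ξ
          simp only [ContinuousLinearMap.comp_apply] at h2
          exact h2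
      exact key a b ha_mem hb_mem

end ProdModule
section Psi

open ContinuousLinearMap

variable {X Y : Type} {𝒳 : LFCMSpace X} {𝒴 : LFCMSpace Y}

/-- The direct sum of two bundled modules. -/
abbrev prodBundled (C D : BundledModule 𝒳) : BundledModule 𝒳 :=
  ⟨WithLp 2 (C.H × D.H), prodModule 𝒳 C.mod D.mod⟩

/-- Conjugation of the image of an approximable operator by the implementing unitaries. -/
def PsiMap (F : StarFunctor 𝒳 𝒴) (U : ∀ M : BundledModule 𝒳, M.H →L[ℂ] (F.obj M).H)
    {P Q : BundledModule 𝒳} (x : P.H →L[ℂ] Q.H)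
    (hx : Approximable 𝒳 P.mod.proj Q.mod.proj x) : P.H →L[ℂ] Q.H :=
  ContinuousLinearMap.adjoint (U Q) ∘L F.map x hx ∘L U P

theorem PsiMap_congr (F : StarFunctor 𝒳 𝒴) (U : ∀ M : BundledModule 𝒳, M.H →L[ℂ] (F.obj M).H)
    {P Q : BundledModule 𝒳} {x y : P.H →L[ℂ] Q.H}
    (hx : Approximable 𝒳 P.mod.proj Q.mod.proj x)
    (hy : Approximable 𝒳 P.mod.proj Q.mod.proj y)
    (h : x = y) : PsiMap F U x hx = PsiMap F U y hy := by
  subst h; rfl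

theorem Psi_fix (F : StarFunctor 𝒳 𝒴) (U : ∀ M : BundledModule 𝒳, M.H →L[ℂ] (F.obj M).H)
    (hU : ∀ M : BundledModule 𝒳, F.Implements M (U M))
    {P : BundledModule 𝒳} (a : P.H →L[ℂ] P.H)
    (ha : Approximable 𝒳 P.mod.proj P.mod.proj a) : PsiMap F U a ha = a := by
  have key : ∀ (y : P.H), ContinuousLinearMap.adjoint (U P) (U P y) = y := fun y => by
    have h := DFunLike.congr_fun (hU P).1.1 y
    simpa using h
  have himpl := (hU P).2 a ha
  ext x
  simp [PsiMap, himpl, key]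

theorem Psi_mul (F : StarFunctor 𝒳 𝒴) (U : ∀ M : BundledModule 𝒳, M.H →L[ℂ] (F.obj M).H)
    (hU : ∀ M : BundledModule 𝒳, F.Implements M (U M))
    {P Q R : BundledModule 𝒳} (x : P.H →L[ℂ] Q.H) (y : Q.H →L[ℂ] R.H)
    (hx : Approximable 𝒳 P.mod.proj Q.mod.proj x)
    (hy : Approximable 𝒳 Q.mod.proj R.mod.proj y)
    (hyx : Approximable 𝒳 P.mod.proj R.mod.proj (y ∘L x)) :
    PsiMap F U (y ∘L x) hyx = PsiMap F U y hy ∘L PsiMap F U x hx := by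
  have key : ∀ (z : (F.obj Q).H), U Q (ContinuousLinearMap.adjoint (U Q) z) = z := fun z => by
    have h := DFunLike.congr_fun (hU Q).1.2 z
    simpa using h
  have hcomp := F.map_comp x y hx hy hyx
  ext w
  simp [PsiMap, hcomp, key]

theorem Psi_star (F : StarFunctor 𝒳 𝒴) (U : ∀ M : BundledModule 𝒳, M.H →L[ℂ] (F.obj M).H)
    {P Q : BundledModule 𝒳} (x : P.H →L[ℂ] Q.H)
    (hx : Approximable 𝒳 P.mod.proj Q.mod.proj x)
    (hx' : Approximable 𝒳 Q.mod.proj P.mod.proj (ContinuousLinearMap.adjoint x)) :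
    PsiMap F U (ContinuousLinearMap.adjoint x) hx'
      = ContinuousLinearMap.adjoint (PsiMap F U x hx) := by
  unfold PsiMap
  rw [F.map_star x hx hx', adjoint_comp, adjoint_comp, adjoint_adjoint]
  ext w
  simp

end Psi
section ApproxLemmas

open ContinuousLinearMap

variable {X : Type} {𝒳 : LFCMSpace X} (C D : BundledModule 𝒳)

theorem prodBundled_proj (A : Set X) :
    (prodBundled C D).mod.proj A = prodOp (C.mod.proj A) (D.mod.proj A) := rfl

theorem approxInl :
    Approximable 𝒳 C.mod.proj (prodBundled C D).mod.proj (inlOp C.H D.H) :=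
  IsDirectSum.approximable_inl (M := (prodBundled C D).mod) (fun _ => rfl)

theorem approxInr :
    Approximable 𝒳 D.mod.proj (prodBundled C D).mod.proj (inrOp C.H D.H) :=
  IsDirectSum.approximable_inr (M := (prodBundled C D).mod) (fun _ => rfl)

theorem approxFst :
    Approximable 𝒳 (prodBundled C D).mod.proj C.mod.proj (fstOp C.H D.H) := by
  refine approximable_of_controlled 𝒳 _ _
    (hasControlledPropagation_of_nonempty 𝒳 _ _ _ ?_)
  intro B A hB hA hne
  by_contra h
  rw [Set.not_nonempty_iff_eq_empty] at h
  apply hne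
  rw [prodBundled_proj, fstOp_comp_prodOp, ← ContinuousLinearMap.comp_assoc,
    ← C.mod.proj_inter hB hA, h, C.mod.proj_empty]
  ext x; simp

theorem approxSnd :
    Approximable 𝒳 (prodBundled C D).mod.proj D.mod.proj (sndOp C.H D.H) := by
  refine approximable_of_controlled 𝒳 _ _
    (hasControlledPropagation_of_nonempty 𝒳 _ _ _ ?_)
  intro B A hB hA hne
  by_contra h
  rw [Set.not_nonempty_iff_eq_empty] at h
  apply hne
  rw [prodBundled_proj, sndOp_comp_prodOp, ← ContinuousLinearMap.comp_assoc,
    ← D.mod.proj_inter hB hA, h, D.mod.proj_empty]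
  ext x; simp

variable {C D}

theorem approxInlComp {E : BundledModule 𝒳} {a : E.H →L[ℂ] C.H}
    (ha : Approximable 𝒳 E.mod.proj C.mod.proj a) :
    Approximable 𝒳 E.mod.proj (prodBundled C D).mod.proj (inlOp C.H D.H ∘L a) := by
  have h := approximable_sandwich 𝒳 E.mod.proj (prodBundled C D).mod.proj
    E.mod.proj C.mod.proj (ContinuousLinearMap.id ℂ E.H) (inlOp C.H D.H)
    (fun A _ => by rw [ContinuousLinearMap.id_comp, ContinuousLinearMap.comp_id])
    (fun B hB => by rw [prodBundled_proj]; exact prodOp_comp_inlOp _ _)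
    (ContinuousLinearMap.norm_id_le) norm_inlOp_le ha
  rwa [ContinuousLinearMap.comp_id] at h

theorem approxInrComp {E : BundledModule 𝒳} {b : E.H →L[ℂ] D.H}
    (hb : Approximable 𝒳 E.mod.proj D.mod.proj b) :
    Approximable 𝒳 E.mod.proj (prodBundled C D).mod.proj (inrOp C.H D.H ∘L b) := by
  have h := approximable_sandwich 𝒳 E.mod.proj (prodBundled C D).mod.proj
    E.mod.proj D.mod.proj (ContinuousLinearMap.id ℂ E.H) (inrOp C.H D.H)
    (fun A _ => by rw [ContinuousLinearMap.id_comp, ContinuousLinearMap.comp_id])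
    (fun B hB => by rw [prodBundled_proj]; exact prodOp_comp_inrOp _ _)
    (ContinuousLinearMap.norm_id_le) norm_inrOp_le hb
  rwa [ContinuousLinearMap.comp_id] at h

theorem approxCompFst {E : BundledModule 𝒳} {a : C.H →L[ℂ] E.H}
    (ha : Approximable 𝒳 C.mod.proj E.mod.proj a) :
    Approximable 𝒳 (prodBundled C D).mod.proj E.mod.proj (a ∘L fstOp C.H D.H) := by
  have h := approximable_sandwich 𝒳 (prodBundled C D).mod.proj E.mod.proj
    C.mod.proj E.mod.proj (fstOp C.H D.H) (ContinuousLinearMap.id ℂ E.H)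
    (fun A hA => by rw [prodBundled_proj]; exact fstOp_comp_prodOp _ _)
    (fun B _ => by rw [ContinuousLinearMap.id_comp, ContinuousLinearMap.comp_id])
    norm_fstOp_le (ContinuousLinearMap.norm_id_le) ha
  rwa [ContinuousLinearMap.id_comp] at h

theorem approxCompSnd {E : BundledModule 𝒳} {b : D.H →L[ℂ] E.H}
    (hb : Approximable 𝒳 D.mod.proj E.mod.proj b) :
    Approximable 𝒳 (prodBundled C D).mod.proj E.mod.proj (b ∘L sndOp C.H D.H) := by
  have h := approximable_sandwich 𝒳 (prodBundled C D).mod.proj E.mod.proj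
    D.mod.proj E.mod.proj (sndOp C.H D.H) (ContinuousLinearMap.id ℂ E.H)
    (fun A hA => by rw [prodBundled_proj]; exact sndOp_comp_prodOp _ _)
    (fun B _ => by rw [ContinuousLinearMap.id_comp, ContinuousLinearMap.comp_id])
    norm_sndOp_le (ContinuousLinearMap.norm_id_le) hb
  rwa [ContinuousLinearMap.id_comp] at h

theorem approxOff {t : C.H →L[ℂ] D.H}
    (ht : Approximable 𝒳 C.mod.proj D.mod.proj t) :
    Approximable 𝒳 (prodBundled C D).mod.proj (prodBundled C D).mod.proj
      (inrOp C.H D.H ∘L t ∘L fstOp C.H D.H) :=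
  approximable_sandwich 𝒳 (prodBundled C D).mod.proj (prodBundled C D).mod.proj
    C.mod.proj D.mod.proj (fstOp C.H D.H) (inrOp C.H D.H)
    (fun A hA => by rw [prodBundled_proj]; exact fstOp_comp_prodOp _ _)
    (fun B hB => by rw [prodBundled_proj]; exact prodOp_comp_inrOp _ _)
    norm_fstOp_le norm_inrOp_le ht

theorem approxDiag0 {a : C.H →L[ℂ] C.H}
    (ha : Approximable 𝒳 C.mod.proj C.mod.proj a) :
    Approximable 𝒳 (prodBundled C D).mod.proj (prodBundled C D).mod.proj
      (inlOp C.H D.H ∘L a ∘L fstOp C.H D.H) :=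
  approximable_sandwich 𝒳 (prodBundled C D).mod.proj (prodBundled C D).mod.proj
    C.mod.proj C.mod.proj (fstOp C.H D.H) (inlOp C.H D.H)
    (fun A hA => by rw [prodBundled_proj]; exact fstOp_comp_prodOp _ _)
    (fun B hB => by rw [prodBundled_proj]; exact prodOp_comp_inlOp _ _)
    norm_fstOp_le norm_inlOp_le ha

theorem approxDiag1 {b : D.H →L[ℂ] D.H}
    (hb : Approximable 𝒳 D.mod.proj D.mod.proj b) :
    Approximable 𝒳 (prodBundled C D).mod.proj (prodBundled C D).mod.proj
      (inrOp C.H D.H ∘L b ∘L sndOp C.H D.H) :=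
  approximable_sandwich 𝒳 (prodBundled C D).mod.proj (prodBundled C D).mod.proj
    D.mod.proj D.mod.proj (sndOp C.H D.H) (inrOp C.H D.H)
    (fun A hA => by rw [prodBundled_proj]; exact sndOp_comp_prodOp _ _)
    (fun B hB => by rw [prodBundled_proj]; exact prodOp_comp_inrOp _ _)
    norm_sndOp_le norm_inrOp_le hb

end ApproxLemmas
section Central

open ContinuousLinearMap

variable {X : Type} {𝒳 : LFCMSpace X} {H : Type}
  [NormedAddCommGroup H] [InnerProductSpace ℂ H] [CompleteSpace H]

theorem approximable_of_comm_proj (P : CoarseModule 𝒳 H) (w : H →L[ℂ] H)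
    (hcomm : ∀ A ∈ 𝒳.meas, w ∘L P.proj A = P.proj A ∘L w) :
    Approximable 𝒳 P.proj P.proj w := by
  refine approximable_of_controlled 𝒳 _ _
    (hasControlledPropagation_of_nonempty 𝒳 _ _ _ ?_)
  intro B A hB hA hne
  by_contra h
  rw [Set.not_nonempty_iff_eq_empty] at h
  apply hne
  calc P.proj B ∘L w ∘L P.proj A
      = (P.proj B ∘L w) ∘L P.proj A := (ContinuousLinearMap.comp_assoc _ _ _).symm
    _ = (w ∘L P.proj B) ∘L P.proj A := by rw [hcomm B hB]
    _ = w ∘L (P.proj B ∘L P.proj A) := ContinuousLinearMap.comp_assoc _ _ _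
    _ = 0 := by
        rw [← P.proj_inter hB hA, h, P.proj_empty]
        ext x; simp

theorem isCentralUnitary_of_comm (P : CoarseModule 𝒳 H) {w : H →L[ℂ] H}
    (hu : IsUnitaryOp w)
    (hcomm : ∀ s : H →L[ℂ] H, Approximable 𝒳 P.proj P.proj s → w ∘L s = s ∘L w) :
    IsCentralUnitary 𝒳 P w :=
  ⟨approximable_of_comm_proj P w (fun A hA => hcomm _ (approx_proj_mod 𝒳 P hA)), hu, hcomm⟩

theorem IsCentralUnitary.adjointOp (P : CoarseModule 𝒳 H) {w : H →L[ℂ] H}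
    (h : IsCentralUnitary 𝒳 P w) :
    IsCentralUnitary 𝒳 P (ContinuousLinearMap.adjoint w) := by
  obtain ⟨happ, hu, hcomm⟩ := h
  refine isCentralUnitary_of_comm P
    ⟨by rw [adjoint_adjoint]; exact hu.2, by rw [adjoint_adjoint]; exact hu.1⟩ ?_
  intro s hs
  calc adjoint w ∘L s
      = adjoint w ∘L (s ∘L (w ∘L adjoint w)) := by
        rw [hu.2, ContinuousLinearMap.comp_id]
    _ = adjoint w ∘L ((s ∘L w) ∘L adjoint w) := by
        simp only [ContinuousLinearMap.comp_assoc]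
    _ = adjoint w ∘L ((w ∘L s) ∘L adjoint w) := by rw [← hcomm s hs]
    _ = (adjoint w ∘L w) ∘L (s ∘L adjoint w) := by
        simp only [ContinuousLinearMap.comp_assoc]
    _ = s ∘L adjoint w := by rw [hu.1, ContinuousLinearMap.id_comp]

end Central
section Shape

open ContinuousLinearMap

variable {X Y : Type} {𝒳 : LFCMSpace X} {𝒴 : LFCMSpace Y}
  (F : StarFunctor 𝒳 𝒴) (U : ∀ M : BundledModule 𝒳, M.H →L[ℂ] (F.obj M).H)
  (hU : ∀ M : BundledModule 𝒳, F.Implements M (U M))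
  (C D : BundledModule 𝒳)

theorem adjoint_PsiMap_snd :
    ContinuousLinearMap.adjoint (PsiMap (P := prodBundled C D) (Q := D) F U (sndOp C.H D.H) (approxSnd C D))
      = PsiMap (P := D) (Q := prodBundled C D) F U (inrOp C.H D.H) (approxInr C D) := by
  have hadj : Approximable 𝒳 D.mod.proj (prodBundled C D).mod.proj
      (ContinuousLinearMap.adjoint (sndOp C.H D.H)) := by
    have h := approxInr C D
    rwa [← adjoint_sndOp] at h
  exact (Psi_star F U _ (approxSnd C D) hadj).symm.trans
    (PsiMap_congr F U hadj (approxInr C D) adjoint_sndOp)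

theorem adjoint_PsiMap_fst :
    ContinuousLinearMap.adjoint (PsiMap (P := prodBundled C D) (Q := C) F U (fstOp C.H D.H) (approxFst C D))
      = PsiMap (P := C) (Q := prodBundled C D) F U (inlOp C.H D.H) (approxInl C D) := by
  have hadj : Approximable 𝒳 C.mod.proj (prodBundled C D).mod.proj
      (ContinuousLinearMap.adjoint (fstOp C.H D.H)) := by
    have h := approxInl C D
    rwa [← adjoint_fstOp] at h
  exact (Psi_star F U _ (approxFst C D) hadj).symm.trans
    (PsiMap_congr F U hadj (approxInl C D) adjoint_fstOp)

include hU in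
theorem vCentral :
    IsCentralUnitary 𝒳 D.mod
      (PsiMap (P := prodBundled C D) (Q := D) F U (sndOp C.H D.H) (approxSnd C D) ∘L inrOp C.H D.H) := by
  have hπ₁ := approxSnd C D
  have hι₁ := approxInr C D
  have hidD := approx_id_mod 𝒳 D.mod
  have a3 : sndOp C.H D.H ∘L (inrOp C.H D.H ∘L sndOp C.H D.H) = sndOp C.H D.H := by
    ext x; simp [sndOp, inrOp]
  have a4 : sndOp C.H D.H ∘L inrOp C.H D.H = ContinuousLinearMap.id ℂ D.H := by
    ext x; simp [sndOp, inrOp]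
  have hP1 : Approximable 𝒳 (prodBundled C D).mod.proj (prodBundled C D).mod.proj
      (inrOp C.H D.H ∘L sndOp C.H D.H) := by
    have h := approxDiag1 (C := C) hidD
    rwa [ContinuousLinearMap.id_comp] at h
  have hX : Approximable 𝒳 (prodBundled C D).mod.proj D.mod.proj
      (sndOp C.H D.H ∘L (inrOp C.H D.H ∘L sndOp C.H D.H)) := by
    rw [a3]; exact hπ₁
  have hY : Approximable 𝒳 D.mod.proj D.mod.proj
      (sndOp C.H D.H ∘L inrOp C.H D.H) := by
    rw [a4]; exact hidD
  have hadj_v : ContinuousLinearMap.adjoint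
        (PsiMap (P := prodBundled C D) (Q := D) F U (sndOp C.H D.H) hπ₁ ∘L inrOp C.H D.H)
      = sndOp C.H D.H ∘L PsiMap (P := D) (Q := prodBundled C D) F U (inrOp C.H D.H) hι₁ :=
    (adjoint_comp _ _).trans (comp_congr adjoint_inrOp (adjoint_PsiMap_snd F U C D))
  refine isCentralUnitary_of_comm D.mod ⟨?_, ?_⟩ ?_
  · -- adjoint v ∘L v = id
    rw [hadj_v]
    calc (sndOp C.H D.H ∘L PsiMap (P := D) (Q := prodBundled C D) F U (inrOp C.H D.H) hι₁)
          ∘L (PsiMap (P := prodBundled C D) (Q := D) F U (sndOp C.H D.H) hπ₁ ∘L inrOp C.H D.H)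
        = sndOp C.H D.H ∘L ((PsiMap (P := D) (Q := prodBundled C D) F U (inrOp C.H D.H) hι₁
            ∘L PsiMap (P := prodBundled C D) (Q := D) F U (sndOp C.H D.H) hπ₁) ∘L inrOp C.H D.H) := by
          simp only [ContinuousLinearMap.comp_assoc]
      _ = sndOp C.H D.H ∘L ((inrOp C.H D.H ∘L sndOp C.H D.H) ∘L inrOp C.H D.H) := by
          rw [← Psi_mul F U hU _ _ hπ₁ hι₁ hP1, Psi_fix F U hU _ hP1]
      _ = ContinuousLinearMap.id ℂ D.H := by ext x; simp [sndOp, inrOp]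
  · -- v ∘L adjoint v = id
    rw [hadj_v]
    calc (PsiMap (P := prodBundled C D) (Q := D) F U (sndOp C.H D.H) hπ₁ ∘L inrOp C.H D.H)
          ∘L (sndOp C.H D.H ∘L PsiMap (P := D) (Q := prodBundled C D) F U (inrOp C.H D.H) hι₁)
        = (PsiMap (P := prodBundled C D) (Q := D) F U (sndOp C.H D.H) hπ₁ ∘L (inrOp C.H D.H ∘L sndOp C.H D.H))
            ∘L PsiMap (P := D) (Q := prodBundled C D) F U (inrOp C.H D.H) hι₁ := by
          simp only [ContinuousLinearMap.comp_assoc]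
      _ = (PsiMap (P := prodBundled C D) (Q := D) F U (sndOp C.H D.H) hπ₁
            ∘L PsiMap (P := prodBundled C D) (Q := prodBundled C D) F U (inrOp C.H D.H ∘L sndOp C.H D.H) hP1)
            ∘L PsiMap (P := D) (Q := prodBundled C D) F U (inrOp C.H D.H) hι₁ := by
          rw [Psi_fix F U hU _ hP1]
      _ = PsiMap (P := prodBundled C D) (Q := D) F U (sndOp C.H D.H ∘L (inrOp C.H D.H ∘L sndOp C.H D.H)) hX
            ∘L PsiMap (P := D) (Q := prodBundled C D) F U (inrOp C.H D.H) hι₁ := by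
          rw [← Psi_mul F U hU _ _ hP1 hπ₁ hX]
      _ = PsiMap (P := prodBundled C D) (Q := D) F U (sndOp C.H D.H) hπ₁ ∘L PsiMap (P := D) (Q := prodBundled C D) F U (inrOp C.H D.H) hι₁ := by
          rw [PsiMap_congr F U hX hπ₁ a3]
      _ = PsiMap (P := D) (Q := D) F U (sndOp C.H D.H ∘L inrOp C.H D.H) hY := by
          rw [← Psi_mul F U hU _ _ hι₁ hπ₁ hY]
      _ = PsiMap (P := D) (Q := D) F U (ContinuousLinearMap.id ℂ D.H) hidD := PsiMap_congr F U hY hidD a4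
      _ = ContinuousLinearMap.id ℂ D.H := Psi_fix F U hU _ hidD
  · -- centrality
    intro s hs
    have hdiag := approxDiag1 (C := C) hs
    have hsnd := approxCompSnd (C := C) hs
    have a5 : (inrOp C.H D.H ∘L s ∘L sndOp C.H D.H) ∘L inrOp C.H D.H
        = inrOp C.H D.H ∘L s := by ext x; simp [sndOp, inrOp]
    have a6 : sndOp C.H D.H ∘L (inrOp C.H D.H ∘L s ∘L sndOp C.H D.H)
        = s ∘L sndOp C.H D.H := by ext x; simp [sndOp, inrOp]
    have hZ : Approximable 𝒳 (prodBundled C D).mod.proj D.mod.proj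
        (sndOp C.H D.H ∘L (inrOp C.H D.H ∘L s ∘L sndOp C.H D.H)) := by
      rw [a6]; exact hsnd
    calc (PsiMap (P := prodBundled C D) (Q := D) F U (sndOp C.H D.H) hπ₁ ∘L inrOp C.H D.H) ∘L s
        = PsiMap (P := prodBundled C D) (Q := D) F U (sndOp C.H D.H) hπ₁ ∘L (inrOp C.H D.H ∘L s) := by
          simp only [ContinuousLinearMap.comp_assoc]
      _ = PsiMap (P := prodBundled C D) (Q := D) F U (sndOp C.H D.H) hπ₁
            ∘L ((inrOp C.H D.H ∘L s ∘L sndOp C.H D.H) ∘L inrOp C.H D.H) := by rw [a5]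
      _ = PsiMap (P := prodBundled C D) (Q := D) F U (sndOp C.H D.H) hπ₁
            ∘L (PsiMap (P := prodBundled C D) (Q := prodBundled C D) F U (inrOp C.H D.H ∘L s ∘L sndOp C.H D.H) hdiag
              ∘L inrOp C.H D.H) := by rw [Psi_fix F U hU _ hdiag]
      _ = (PsiMap (P := prodBundled C D) (Q := D) F U (sndOp C.H D.H) hπ₁
            ∘L PsiMap (P := prodBundled C D) (Q := prodBundled C D) F U (inrOp C.H D.H ∘L s ∘L sndOp C.H D.H) hdiag)
            ∘L inrOp C.H D.H := by simp only [ContinuousLinearMap.comp_assoc]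
      _ = PsiMap (P := prodBundled C D) (Q := D) F U (sndOp C.H D.H ∘L (inrOp C.H D.H ∘L s ∘L sndOp C.H D.H)) hZ
            ∘L inrOp C.H D.H := by rw [← Psi_mul F U hU _ _ hdiag hπ₁ hZ]
      _ = PsiMap (P := prodBundled C D) (Q := D) F U (s ∘L sndOp C.H D.H) hsnd ∘L inrOp C.H D.H := by
          rw [PsiMap_congr F U hZ hsnd a6]
      _ = (PsiMap F U s hs ∘L PsiMap (P := prodBundled C D) (Q := D) F U (sndOp C.H D.H) hπ₁) ∘L inrOp C.H D.H := by
          rw [Psi_mul F U hU _ _ hπ₁ hs hsnd]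
      _ = s ∘L (PsiMap (P := prodBundled C D) (Q := D) F U (sndOp C.H D.H) hπ₁ ∘L inrOp C.H D.H) := by
          rw [Psi_fix F U hU _ hs]
          simp only [ContinuousLinearMap.comp_assoc]

include hU in
theorem uCentral :
    IsCentralUnitary 𝒳 C.mod
      (PsiMap (P := prodBundled C D) (Q := C) F U (fstOp C.H D.H) (approxFst C D) ∘L inlOp C.H D.H) := by
  have hπ₀ := approxFst C D
  have hι₀ := approxInl C D
  have hidC := approx_id_mod 𝒳 C.mod
  have a3 : fstOp C.H D.H ∘L (inlOp C.H D.H ∘L fstOp C.H D.H) = fstOp C.H D.H := by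
    ext x; simp [fstOp, inlOp]
  have a4 : fstOp C.H D.H ∘L inlOp C.H D.H = ContinuousLinearMap.id ℂ C.H := by
    ext x; simp [fstOp, inlOp]
  have hP0 : Approximable 𝒳 (prodBundled C D).mod.proj (prodBundled C D).mod.proj
      (inlOp C.H D.H ∘L fstOp C.H D.H) := by
    have h := approxDiag0 (D := D) hidC
    rwa [ContinuousLinearMap.id_comp] at h
  have hX : Approximable 𝒳 (prodBundled C D).mod.proj C.mod.proj
      (fstOp C.H D.H ∘L (inlOp C.H D.H ∘L fstOp C.H D.H)) := by
    rw [a3]; exact hπ₀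
  have hY : Approximable 𝒳 C.mod.proj C.mod.proj
      (fstOp C.H D.H ∘L inlOp C.H D.H) := by
    rw [a4]; exact hidC
  have hadj_u : ContinuousLinearMap.adjoint
        (PsiMap (P := prodBundled C D) (Q := C) F U (fstOp C.H D.H) hπ₀ ∘L inlOp C.H D.H)
      = fstOp C.H D.H ∘L PsiMap (P := C) (Q := prodBundled C D) F U (inlOp C.H D.H) hι₀ :=
    (adjoint_comp _ _).trans (comp_congr adjoint_inlOp (adjoint_PsiMap_fst F U C D))
  refine isCentralUnitary_of_comm C.mod ⟨?_, ?_⟩ ?_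
  · rw [hadj_u]
    calc (fstOp C.H D.H ∘L PsiMap (P := C) (Q := prodBundled C D) F U (inlOp C.H D.H) hι₀)
          ∘L (PsiMap (P := prodBundled C D) (Q := C) F U (fstOp C.H D.H) hπ₀ ∘L inlOp C.H D.H)
        = fstOp C.H D.H ∘L ((PsiMap (P := C) (Q := prodBundled C D) F U (inlOp C.H D.H) hι₀
            ∘L PsiMap (P := prodBundled C D) (Q := C) F U (fstOp C.H D.H) hπ₀) ∘L inlOp C.H D.H) := by
          simp only [ContinuousLinearMap.comp_assoc]
      _ = fstOp C.H D.H ∘L ((inlOp C.H D.H ∘L fstOp C.H D.H) ∘L inlOp C.H D.H) := by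
          rw [← Psi_mul F U hU _ _ hπ₀ hι₀ hP0, Psi_fix F U hU _ hP0]
      _ = ContinuousLinearMap.id ℂ C.H := by ext x; simp [fstOp, inlOp]
  · rw [hadj_u]
    calc (PsiMap (P := prodBundled C D) (Q := C) F U (fstOp C.H D.H) hπ₀ ∘L inlOp C.H D.H)
          ∘L (fstOp C.H D.H ∘L PsiMap (P := C) (Q := prodBundled C D) F U (inlOp C.H D.H) hι₀)
        = (PsiMap (P := prodBundled C D) (Q := C) F U (fstOp C.H D.H) hπ₀ ∘L (inlOp C.H D.H ∘L fstOp C.H D.H))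
            ∘L PsiMap (P := C) (Q := prodBundled C D) F U (inlOp C.H D.H) hι₀ := by
          simp only [ContinuousLinearMap.comp_assoc]
      _ = (PsiMap (P := prodBundled C D) (Q := C) F U (fstOp C.H D.H) hπ₀
            ∘L PsiMap (P := prodBundled C D) (Q := prodBundled C D) F U (inlOp C.H D.H ∘L fstOp C.H D.H) hP0)
            ∘L PsiMap (P := C) (Q := prodBundled C D) F U (inlOp C.H D.H) hι₀ := by
          rw [Psi_fix F U hU _ hP0]
      _ = PsiMap (P := prodBundled C D) (Q := C) F U (fstOp C.H D.H ∘L (inlOp C.H D.H ∘L fstOp C.H D.H)) hX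
            ∘L PsiMap (P := C) (Q := prodBundled C D) F U (inlOp C.H D.H) hι₀ := by
          rw [← Psi_mul F U hU _ _ hP0 hπ₀ hX]
      _ = PsiMap (P := prodBundled C D) (Q := C) F U (fstOp C.H D.H) hπ₀ ∘L PsiMap (P := C) (Q := prodBundled C D) F U (inlOp C.H D.H) hι₀ := by
          rw [PsiMap_congr F U hX hπ₀ a3]
      _ = PsiMap (P := C) (Q := C) F U (fstOp C.H D.H ∘L inlOp C.H D.H) hY := by
          rw [← Psi_mul F U hU _ _ hι₀ hπ₀ hY]
      _ = PsiMap (P := C) (Q := C) F U (ContinuousLinearMap.id ℂ C.H) hidC := PsiMap_congr F U hY hidC a4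
      _ = ContinuousLinearMap.id ℂ C.H := Psi_fix F U hU _ hidC
  · intro s hs
    have hdiag := approxDiag0 (D := D) hs
    have hfst := approxCompFst (D := D) hs
    have a5 : (inlOp C.H D.H ∘L s ∘L fstOp C.H D.H) ∘L inlOp C.H D.H
        = inlOp C.H D.H ∘L s := by ext x; simp [fstOp, inlOp]
    have a6 : fstOp C.H D.H ∘L (inlOp C.H D.H ∘L s ∘L fstOp C.H D.H)
        = s ∘L fstOp C.H D.H := by ext x; simp [fstOp, inlOp]
    have hZ : Approximable 𝒳 (prodBundled C D).mod.proj C.mod.proj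
        (fstOp C.H D.H ∘L (inlOp C.H D.H ∘L s ∘L fstOp C.H D.H)) := by
      rw [a6]; exact hfst
    calc (PsiMap (P := prodBundled C D) (Q := C) F U (fstOp C.H D.H) hπ₀ ∘L inlOp C.H D.H) ∘L s
        = PsiMap (P := prodBundled C D) (Q := C) F U (fstOp C.H D.H) hπ₀ ∘L (inlOp C.H D.H ∘L s) := by
          simp only [ContinuousLinearMap.comp_assoc]
      _ = PsiMap (P := prodBundled C D) (Q := C) F U (fstOp C.H D.H) hπ₀
            ∘L ((inlOp C.H D.H ∘L s ∘L fstOp C.H D.H) ∘L inlOp C.H D.H) := by rw [a5]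
      _ = PsiMap (P := prodBundled C D) (Q := C) F U (fstOp C.H D.H) hπ₀
            ∘L (PsiMap (P := prodBundled C D) (Q := prodBundled C D) F U (inlOp C.H D.H ∘L s ∘L fstOp C.H D.H) hdiag
              ∘L inlOp C.H D.H) := by rw [Psi_fix F U hU _ hdiag]
      _ = (PsiMap (P := prodBundled C D) (Q := C) F U (fstOp C.H D.H) hπ₀
            ∘L PsiMap (P := prodBundled C D) (Q := prodBundled C D) F U (inlOp C.H D.H ∘L s ∘L fstOp C.H D.H) hdiag)
            ∘L inlOp C.H D.H := by simp only [ContinuousLinearMap.comp_assoc]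
      _ = PsiMap (P := prodBundled C D) (Q := C) F U (fstOp C.H D.H ∘L (inlOp C.H D.H ∘L s ∘L fstOp C.H D.H)) hZ
            ∘L inlOp C.H D.H := by rw [← Psi_mul F U hU _ _ hdiag hπ₀ hZ]
      _ = PsiMap (P := prodBundled C D) (Q := C) F U (s ∘L fstOp C.H D.H) hfst ∘L inlOp C.H D.H := by
          rw [PsiMap_congr F U hZ hfst a6]
      _ = (PsiMap F U s hs ∘L PsiMap (P := prodBundled C D) (Q := C) F U (fstOp C.H D.H) hπ₀) ∘L inlOp C.H D.H := by
          rw [Psi_mul F U hU _ _ hπ₀ hs hfst]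
      _ = s ∘L (PsiMap (P := prodBundled C D) (Q := C) F U (fstOp C.H D.H) hπ₀ ∘L inlOp C.H D.H) := by
          rw [Psi_fix F U hU _ hs]
          simp only [ContinuousLinearMap.comp_assoc]

end Shape
/-- Structure of full and faithful *-functors: on morphisms, such a
functor is conjugation by the implementing unitaries, up to central unitaries. -/
theorem starFunctor_structure_on_morphisms {X Y : Type}
    (𝒳 : LFCMSpace X) (𝒴 : LFCMSpace Y)
    (F : StarFunctor 𝒳 𝒴) (hfull : F.Full) (hfaithful : F.Faithful)
    (U : ∀ M : BundledModule 𝒳, M.H →L[ℂ] (F.obj M).H)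
    (hU : ∀ M : BundledModule 𝒳, F.Implements M (U M)) :
    ∀ (C D : BundledModule 𝒳) (t : C.H →L[ℂ] D.H)
      (ht : Approximable 𝒳 C.mod.proj D.mod.proj t),
      ∃ (u : C.H →L[ℂ] C.H) (v : D.H →L[ℂ] D.H),
        IsCentralUnitary 𝒳 C.mod u ∧ IsCentralUnitary 𝒳 D.mod v ∧
        F.map t ht = U D ∘L (v ∘L t ∘L u) ∘L ContinuousLinearMap.adjoint (U C) := by
  intro C D t ht
  have hπ₁ := approxSnd C D
  have hι₁ := approxInr C D
  have hπ₀ := approxFst C D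
  have hι₀ := approxInl C D
  have hι₁t : Approximable 𝒳 C.mod.proj (prodBundled C D).mod.proj
      (inrOp C.H D.H ∘L t) := approxInrComp ht
  have hofft := approxOff (C := C) (D := D) ht
  have a1 : sndOp C.H D.H ∘L (inrOp C.H D.H ∘L t) = t := by
    ext x; simp [sndOp, inrOp]
  have a2 : (inrOp C.H D.H ∘L t ∘L fstOp C.H D.H) ∘L inlOp C.H D.H
      = inrOp C.H D.H ∘L t := by
    ext x; simp [inrOp, fstOp, inlOp]
  have hS : Approximable 𝒳 C.mod.proj D.mod.proj
      (sndOp C.H D.H ∘L (inrOp C.H D.H ∘L t)) := by rw [a1]; exact ht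
  have hA2 : Approximable 𝒳 C.mod.proj (prodBundled C D).mod.proj
      ((inrOp C.H D.H ∘L t ∘L fstOp C.H D.H) ∘L inlOp C.H D.H) := by
    rw [a2]; exact hι₁t
  have main : PsiMap F U t ht
      = (PsiMap (P := prodBundled C D) (Q := D) F U (sndOp C.H D.H) hπ₁ ∘L inrOp C.H D.H)
        ∘L t ∘L (fstOp C.H D.H
          ∘L PsiMap (P := C) (Q := prodBundled C D) F U (inlOp C.H D.H) hι₀) := by
    calc PsiMap F U t ht
        = PsiMap (P := C) (Q := D) F U (sndOp C.H D.H ∘L (inrOp C.H D.H ∘L t)) hS :=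
          (PsiMap_congr F U hS ht a1).symm
      _ = PsiMap (P := prodBundled C D) (Q := D) F U (sndOp C.H D.H) hπ₁
            ∘L PsiMap (P := C) (Q := prodBundled C D) F U (inrOp C.H D.H ∘L t) hι₁t :=
          Psi_mul F U hU _ _ hι₁t hπ₁ hS
      _ = PsiMap (P := prodBundled C D) (Q := D) F U (sndOp C.H D.H) hπ₁
            ∘L PsiMap (P := C) (Q := prodBundled C D) F U
              ((inrOp C.H D.H ∘L t ∘L fstOp C.H D.H) ∘L inlOp C.H D.H) hA2 := by
          rw [PsiMap_congr F U hA2 hι₁t a2]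
      _ = PsiMap (P := prodBundled C D) (Q := D) F U (sndOp C.H D.H) hπ₁
            ∘L (PsiMap (P := prodBundled C D) (Q := prodBundled C D) F U
                (inrOp C.H D.H ∘L t ∘L fstOp C.H D.H) hofft
              ∘L PsiMap (P := C) (Q := prodBundled C D) F U (inlOp C.H D.H) hι₀) := by
          rw [Psi_mul F U hU _ _ hι₀ hofft hA2]
      _ = PsiMap (P := prodBundled C D) (Q := D) F U (sndOp C.H D.H) hπ₁
            ∘L ((inrOp C.H D.H ∘L t ∘L fstOp C.H D.H)
              ∘L PsiMap (P := C) (Q := prodBundled C D) F U (inlOp C.H D.H) hι₀) := by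
          rw [Psi_fix F U hU _ hofft]
      _ = (PsiMap (P := prodBundled C D) (Q := D) F U (sndOp C.H D.H) hπ₁
            ∘L inrOp C.H D.H) ∘L t ∘L (fstOp C.H D.H
              ∘L PsiMap (P := C) (Q := prodBundled C D) F U (inlOp C.H D.H) hι₀) := by
          simp only [ContinuousLinearMap.comp_assoc]
  have hadj_u : ContinuousLinearMap.adjoint
        (PsiMap (P := prodBundled C D) (Q := C) F U (fstOp C.H D.H) hπ₀ ∘L inlOp C.H D.H)
      = fstOp C.H D.H
          ∘L PsiMap (P := C) (Q := prodBundled C D) F U (inlOp C.H D.H) hι₀ :=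
    (ContinuousLinearMap.adjoint_comp _ _).trans
      (comp_congr adjoint_inlOp (adjoint_PsiMap_fst F U C D))
  refine ⟨ContinuousLinearMap.adjoint
      (PsiMap (P := prodBundled C D) (Q := C) F U (fstOp C.H D.H) hπ₀ ∘L inlOp C.H D.H),
    PsiMap (P := prodBundled C D) (Q := D) F U (sndOp C.H D.H) hπ₁ ∘L inrOp C.H D.H,
    IsCentralUnitary.adjointOp C.mod (uCentral F U hU C D),
    vCentral F U hU C D, ?_⟩
  rw [hadj_u, ← main]
  have keyC : ∀ z, U C (ContinuousLinearMap.adjoint (U C) z) = z := fun z => by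
    have h := DFunLike.congr_fun (hU C).1.2 z
    simpa using h
  have keyD : ∀ z, U D (ContinuousLinearMap.adjoint (U D) z) = z := fun z => by
    have h := DFunLike.congr_fun (hU D).1.2 z
    simpa using h
  ext x
  simp [PsiMap, keyC, keyD]
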